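/- Let ℓ : ℝ^d × U → ℝ satisfy the Hölder condition |ℓ(θ,u) − ℓ(θ',u)| ≤ J(u)(‖θ−θ'‖^α + ‖θ−θ'‖^β) with 0 ≤ α ≤ 1 ≤ β and let ℓ̄_γ(θ,u) = ∫ ℓ(x,u) φ_{d,γ}(x−θ) dx be the Gaussian smoothing. Then there is a constant C < ∞ (depending only on d and β) such that for all θ ∈ ℝ^d, u, and γ ∈ (0,1]: ‖∇_θ ℓ̄_γ(θ,u)‖ ≤ C J(u) γ^{(α−1)/2}. -/

import Mathlib

open MeasureTheory Real

/-- Density of the `d`-dimensional centered Gaussian distribution with covariance `γ • I`. -/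
noncomputable def gaussDensity (d : ℕ) (γ : ℝ) (z : EuclideanSpace ℝ (Fin d)) : ℝ :=
  (2 * π * γ) ^ (-(d : ℝ) / 2) * Real.exp (-‖z‖ ^ 2 / (2 * γ))

/-- Gaussian smoothing of `ℓ(·,u)` at scale `γ`. -/
noncomputable def gaussSmooth {d : ℕ} {U : Type*} (ℓ : EuclideanSpace ℝ (Fin d) → U → ℝ)
    (γ : ℝ) (θ : EuclideanSpace ℝ (Fin d)) (u : U) : ℝ :=
  ∫ x, ℓ x u * gaussDensity d γ (x - θ)

noncomputable def gDeriv (d : ℕ) (γ : ℝ) (w : EuclideanSpace ℝ (Fin d)) :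
    EuclideanSpace ℝ (Fin d) →L[ℝ] ℝ :=
  (γ⁻¹ * gaussDensity d γ w) • innerSL ℝ w

section Aux
variable {d : ℕ}
local notation "E" => EuclideanSpace ℝ (Fin d)

lemma aux_expBound {c p : ℝ} (hc : 0 < c) (hp : 0 ≤ p) :
    ∃ M : ℝ, 0 ≤ M ∧ ∀ t : ℝ, 0 ≤ t → t ^ p * rexp (-(c * t ^ 2)) ≤ M := by
  set k : ℕ := ⌈p⌉₊ + 1 with hkdef
  refine ⟨max 1 (((k : ℝ) / c) ^ k), le_trans zero_le_one (le_max_left _ _), fun t ht => ?_⟩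
  rcases le_or_gt t 1 with h1 | h1
  · have h2 : t ^ p ≤ 1 := Real.rpow_le_one ht h1 hp
    have h3 : rexp (-(c * t ^ 2)) ≤ 1 := by
      rw [Real.exp_le_one_iff]; nlinarith
    refine le_trans ?_ (le_max_left _ _)
    have := mul_le_one₀ h2 (Real.exp_pos _).le h3
    linarith
  · have ht0 : (0:ℝ) < t := lt_trans one_pos h1
    have hp2k : p ≤ (2 * k : ℝ) := by
      have h := Nat.le_ceil p
      have : (⌈p⌉₊ : ℝ) ≤ k := by exact_mod_cast Nat.le_succ _
      push_cast
      nlinarith [Nat.cast_nonneg (α := ℝ) ⌈p⌉₊]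
    have h2 : t ^ p ≤ t ^ (2 * k) := by
      have := Real.rpow_le_rpow_of_exponent_le h1.le hp2k
      rwa [show ((2:ℝ) * k) = ((2 * k : ℕ) : ℝ) by push_cast; ring, Real.rpow_natCast] at this
    have hct : 0 < c * t ^ 2 := by positivity
    have hk0 : (0:ℝ) < k := by positivity
    have hek : ((c * t ^ 2) / k) ^ k ≤ rexp (c * t ^ 2) := by
      have h4 : (c * t ^ 2) / k ≤ rexp ((c * t ^ 2) / k) := by
        have := Real.add_one_le_exp ((c * t ^ 2) / k); linarith
      calc ((c * t ^ 2) / k) ^ k ≤ (rexp ((c * t ^ 2) / k)) ^ k :=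
            pow_le_pow_left₀ (by positivity) h4 k
        _ = rexp (c * t ^ 2) := by
            rw [← Real.exp_nat_mul]; congr 1; field_simp
    have h5 : rexp (-(c * t ^ 2)) ≤ ((k : ℝ) / (c * t ^ 2)) ^ k := by
      rw [Real.exp_neg]
      have hxk : (0:ℝ) < ((c * t ^ 2) / k) ^ k := by positivity
      calc (rexp (c * t ^ 2))⁻¹ ≤ (((c * t ^ 2) / k) ^ k)⁻¹ := by
            exact inv_anti₀ hxk hek
        _ = ((k : ℝ) / (c * t ^ 2)) ^ k := by
            rw [← inv_pow]; congr 1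
            rw [inv_div]
    refine le_trans ?_ (le_max_right _ _)
    calc t ^ p * rexp (-(c * t ^ 2)) ≤ t ^ (2 * k) * (((k:ℝ) / (c * t ^ 2)) ^ k) :=
          mul_le_mul h2 h5 (Real.exp_pos _).le (by positivity)
      _ = ((k : ℝ) / c) ^ k := by
          rw [pow_mul, ← mul_pow]
          congr 1
          field_simp

lemma aux_gaussInt {b : ℝ} (hb : 0 < b) :
    Integrable (fun v : E => rexp (-(b * ‖v‖ ^ 2))) := by
  have h := (GaussianFourier.integrable_cexp_neg_mul_sq_norm_add
    (V := E) (b := (b : ℂ)) (by simpa using hb) 0 0).norm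
  refine h.congr (Filter.Eventually.of_forall fun v => ?_)
  have hc : (-(b:ℂ) * (‖v‖:ℂ) ^ 2 + 0 * (inner ℝ (0 : E) v : ℝ)) = ((-(b * ‖v‖^2) : ℝ) : ℂ) := by
    push_cast; ring
  simp only []
  rw [hc, Complex.norm_exp, Complex.ofReal_re]

-- master integrability
lemma aux_masterInt {b q : ℝ} (hb : 0 < b) (hq : 0 ≤ q) :
    Integrable (fun v : E => (1 + ‖v‖ ^ q) * (1 + ‖v‖) * rexp (-(b * ‖v‖ ^ 2))) := by
  obtain ⟨M1, hM1nn, hM1⟩ := aux_expBound (c := b/4) (p := q) (by linarith) hq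
  obtain ⟨M2, hM2nn, hM2⟩ := aux_expBound (c := b/4) (p := 1) (by linarith) zero_le_one
  have hcont : Continuous (fun v : E => (1 + ‖v‖ ^ q) * (1 + ‖v‖) * rexp (-(b * ‖v‖ ^ 2))) := by
    have h1 : Continuous (fun v : E => ‖v‖ ^ q) :=
      continuous_norm.rpow_const (fun v => Or.inr hq)
    fun_prop
  refine ((aux_gaussInt (d := d) (show (0:ℝ) < b/2 by linarith)).const_mul
    ((1 + M1) * (1 + M2))).mono' hcont.aestronglyMeasurable
    (Filter.Eventually.of_forall fun v => ?_)
  set t := ‖v‖ with htdef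
  have ht : 0 ≤ t := norm_nonneg v
  have e1 : (1 + t ^ q) * rexp (-(b/4 * t ^ 2)) ≤ 1 + M1 := by
    have := hM1 t ht
    have he : rexp (-(b/4 * t ^ 2)) ≤ 1 := by rw [Real.exp_le_one_iff]; nlinarith
    nlinarith [Real.exp_pos (-(b/4 * t ^ 2))]
  have e2 : (1 + t) * rexp (-(b/4 * t ^ 2)) ≤ 1 + M2 := by
    have := hM2 t ht
    rw [Real.rpow_one] at this
    have he : rexp (-(b/4 * t ^ 2)) ≤ 1 := by rw [Real.exp_le_one_iff]; nlinarith
    nlinarith [Real.exp_pos (-(b/4 * t ^ 2))]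
  have hsplit : rexp (-(b * t ^ 2)) =
      rexp (-(b/4 * t ^ 2)) * rexp (-(b/4 * t ^ 2)) * rexp (-(b/2 * t ^ 2)) := by
    rw [← Real.exp_add, ← Real.exp_add]; ring_nf
  have hnn : 0 ≤ (1 + t ^ q) * (1 + t) * rexp (-(b * t ^ 2)) := by positivity
  rw [Real.norm_of_nonneg hnn]
  calc (1 + t ^ q) * (1 + t) * rexp (-(b * t ^ 2))
      = ((1 + t ^ q) * rexp (-(b/4 * t ^ 2))) * ((1 + t) * rexp (-(b/4 * t ^ 2)))
        * rexp (-(b/2 * t ^ 2)) := by rw [hsplit]; ring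
    _ ≤ (1 + M1) * (1 + M2) * rexp (-(b/2 * t ^ 2)) := by
        have h1nn : 0 ≤ (1 + t ^ q) * rexp (-(b/4 * t ^ 2)) := by positivity
        have h2nn : 0 ≤ (1 + t) * rexp (-(b/4 * t ^ 2)) := by positivity
        have := mul_le_mul e1 e2 h2nn (by nlinarith [hM1 0 le_rfl])
        nlinarith [Real.exp_pos (-(b/2 * t ^ 2))]

lemma gaussDensity_eq {γ : ℝ} (z : E) :
    gaussDensity d γ z = (2 * π * γ) ^ (-(d : ℝ) / 2) * rexp (-(2*γ)⁻¹ * ‖z‖ ^ 2) := by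
  rw [gaussDensity]; congr 2; ring



lemma continuous_gaussDensity {γ : ℝ} : Continuous (fun z : E => gaussDensity d γ z) := by
  have : (fun z : E => gaussDensity d γ z) = fun z : E => (2 * π * γ) ^ (-(d : ℝ) / 2) *
      rexp (-(2*γ)⁻¹ * ‖z‖ ^ 2) := funext gaussDensity_eq
  rw [this]; fun_prop

lemma gaussDensity_nonneg {γ : ℝ} (hγ : 0 < γ) (z : E) : 0 ≤ gaussDensity d γ z := by
  rw [gaussDensity]
  positivity

lemma continuous_gDeriv {γ : ℝ} (θ : E) :
    Continuous (fun x : E => gDeriv d γ (x - θ)) := by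
  have h1 : Continuous (fun x : E => x - θ) := continuous_id.sub continuous_const
  exact ((continuous_const.mul (continuous_gaussDensity.comp h1)).smul
    ((innerSL ℝ : E →L[ℝ] E →L[ℝ] ℝ).continuous.comp h1))

lemma hasFDerivAt_gaussDensity {γ : ℝ} (x z₀ : E) :
    HasFDerivAt (fun z => gaussDensity d γ (x - z)) (gDeriv d γ (x - z₀)) z₀ := by
  set K : ℝ := (2 * π * γ) ^ (-(d : ℝ) / 2) with hK
  have h0 : HasFDerivAt (fun z : E => x - z) (-(ContinuousLinearMap.id ℝ E)) z₀ :=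
    (hasFDerivAt_id z₀).const_sub x
  have hns := h0.norm_sq
  have h2 := ((hns.const_mul (-(2*γ)⁻¹)).exp).const_mul K
  have hfun : (fun z => gaussDensity d γ (x - z))
      = (fun z => K * rexp (-(2*γ)⁻¹ * ‖x - z‖ ^ 2)) := by
    funext z; rw [gaussDensity_eq]
  rw [hfun]
  refine h2.congr_fderiv ?_
  ext v
  simp only [gDeriv, ContinuousLinearMap.smul_apply, innerSL_apply_apply,
    ContinuousLinearMap.coe_smul', Pi.smul_apply, ContinuousLinearMap.coe_comp',
    Function.comp_apply, ContinuousLinearMap.neg_apply, ContinuousLinearMap.coe_id', id_eq,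
    smul_eq_mul, nsmul_eq_mul, Nat.cast_ofNat, inner_neg_right]
  rw [gaussDensity_eq]
  ring

set_option maxHeartbeats 1000000 in
lemma hasFDerivAt_gaussSmoothAux {γ : ℝ} (hγ : 0 < γ) (θ : E) (h : E → ℝ)
    (hm : AEStronglyMeasurable h (volume : Measure E)) {A q : ℝ} (hq : 0 ≤ q)
    (hA : ∀ x : E, |h x| ≤ A * (1 + ‖x - θ‖ ^ q)) :
    HasFDerivAt (fun θ' : E => ∫ x : E, h x * gaussDensity d γ (x - θ'))
      (∫ x : E, h x • gDeriv d γ (x - θ)) θ := by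
  set K : ℝ := (2 * π * γ) ^ (-(d : ℝ) / 2) with hKdef
  have hKpos : 0 < K := by
    rw [hKdef]; positivity
  have hA0 : 0 ≤ A := by
    have h1 := hA θ
    have h2 : (0:ℝ) ≤ ‖θ - θ‖ ^ q := Real.rpow_nonneg (norm_nonneg _) q
    nlinarith [abs_nonneg (h θ)]
  have hb4 : (0:ℝ) < (4*γ)⁻¹ := by positivity
  set Cst : ℝ := A * (γ⁻¹ * K * rexp γ⁻¹) with hCst
  set bound : E → ℝ := fun x =>
    Cst * ((1 + ‖x - θ‖ ^ q) * (1 + ‖x - θ‖) * rexp (-((4*γ)⁻¹ * ‖x - θ‖ ^ 2))) with hbd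
  have hGcont : ∀ θ' : E, Continuous fun x : E => gaussDensity d γ (x - θ') := fun θ' =>
    continuous_gaussDensity.comp (continuous_id.sub continuous_const)
  apply hasFDerivAt_integral_of_dominated_of_fderiv_le (bound := bound)
    (F' := fun θ0 (x : E) => h x • gDeriv d γ (x - θ0)) (Metric.ball_mem_nhds θ one_pos)
  · exact Filter.Eventually.of_forall fun θ' =>
      hm.mul ((hGcont θ').aestronglyMeasurable)
  · -- Integrable (fun x => h x * gaussDensity d γ (x - θ))
    refine (((aux_masterInt (b := (2*γ)⁻¹) (by positivity) hq).comp_sub_right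
        θ).const_mul (A * K)).mono'
      (hm.mul ((hGcont θ).aestronglyMeasurable))
      (Filter.Eventually.of_forall fun x => ?_)
    set t := ‖x - θ‖ with htdef
    have ht : 0 ≤ t := norm_nonneg _
    have htq : (0:ℝ) ≤ t ^ q := Real.rpow_nonneg ht q
    have hGd : gaussDensity d γ (x - θ) = K * rexp (-(2*γ)⁻¹ * t ^ 2) := gaussDensity_eq _
    rw [Real.norm_eq_abs, abs_mul, abs_of_nonneg (gaussDensity_nonneg hγ _), hGd]
    have h1 : |h x| ≤ A * (1 + t ^ q) := hA x
    have hexp : (0:ℝ) < rexp (-(2*γ)⁻¹ * t ^ 2) := Real.exp_pos _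
    have : |h x| * (K * rexp (-(2*γ)⁻¹ * t ^ 2))
        ≤ (A * (1 + t ^ q)) * (K * rexp (-(2*γ)⁻¹ * t ^ 2)) := by
      apply mul_le_mul_of_nonneg_right h1 (by positivity)
    refine this.trans ?_
    have hre : -(2*γ)⁻¹ * t ^ 2 = -((2*γ)⁻¹ * t ^ 2) := by ring
    rw [hre]
    nlinarith [Real.exp_pos (-((2*γ)⁻¹ * t ^ 2)), mul_nonneg (mul_nonneg hA0 hKpos.le)
      (mul_nonneg (mul_nonneg (by linarith : (0:ℝ) ≤ 1 + t^q) ht) hexp.le)]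
  · exact hm.smul (continuous_gDeriv θ).aestronglyMeasurable
  · -- h_bound
    refine Filter.Eventually.of_forall fun x θ' hθ' => ?_
    set t := ‖x - θ‖ with htdef
    set s := ‖x - θ'‖ with hsdef
    have ht : 0 ≤ t := norm_nonneg _
    have hs : 0 ≤ s := norm_nonneg _
    have htq : (0:ℝ) ≤ t ^ q := Real.rpow_nonneg ht q
    have hdist : ‖θ - θ'‖ < 1 := by
      have := Metric.mem_ball.1 hθ'
      rw [dist_comm] at this
      simpa [dist_eq_norm] using this
    have hst1 : s ≤ t + 1 := by
      have h1 : x - θ' = (x - θ) + (θ - θ') := by abel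
      calc s = ‖(x - θ) + (θ - θ')‖ := by rw [hsdef, h1]
        _ ≤ t + ‖θ - θ'‖ := norm_add_le _ _
        _ ≤ t + 1 := by linarith
    have hst2 : t - 1 ≤ s := by
      have h1 : x - θ = (x - θ') + (θ' - θ) := by abel
      have h2 : t ≤ s + ‖θ' - θ‖ := by
        calc t = ‖(x - θ') + (θ' - θ)‖ := by rw [htdef, h1]
          _ ≤ s + ‖θ' - θ‖ := norm_add_le _ _
      have h3 : ‖θ' - θ‖ < 1 := by rwa [norm_sub_rev] at hdist
      linarith
    -- compute norm
    have hnorm : ‖h x • gDeriv d γ (x - θ')‖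
        = |h x| * (γ⁻¹ * gaussDensity d γ (x - θ')) * s := by
      simp only [gDeriv, smul_smul]
      rw [norm_smul _ ((innerSL ℝ : E →L[ℝ] E →L[ℝ] ℝ) (x - θ')), innerSL_apply_norm,
        Real.norm_eq_abs, abs_mul,
        abs_of_nonneg (mul_nonneg (inv_nonneg.2 hγ.le) (gaussDensity_nonneg hγ _))]
    rw [hnorm]
    -- key exponential inequality
    have hkey : t^2/2 - 2 ≤ s^2 := by
      rcases le_or_gt t 2 with h2 | h2
      · nlinarith
      · have h3 : (t-1)^2 ≤ s^2 := by nlinarith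
        nlinarith [sq_nonneg (t-2)]
    have hexp : rexp (-(2*γ)⁻¹ * s^2) ≤ rexp γ⁻¹ * rexp (-((4*γ)⁻¹ * t^2)) := by
      rw [← Real.exp_add]
      apply Real.exp_le_exp.2
      have e3 : (2*γ)⁻¹ * (t^2/2 - 2) = (4*γ)⁻¹ * t^2 - γ⁻¹ := by
        field_simp; ring
      have e4 := mul_le_mul_of_nonneg_left hkey (by positivity : (0:ℝ) ≤ (2*γ)⁻¹)
      rw [e3] at e4
      nlinarith [mul_nonneg (by positivity : (0:ℝ) ≤ (2*γ)⁻¹) (sq_nonneg s)]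
    have m1 : γ⁻¹ * gaussDensity d γ (x - θ')
        ≤ γ⁻¹ * (K * (rexp γ⁻¹ * rexp (-((4*γ)⁻¹ * t^2)))) := by
      rw [gaussDensity_eq]
      have := mul_le_mul_of_nonneg_left hexp hKpos.le
      have h5 := mul_le_mul_of_nonneg_left this (inv_nonneg.2 hγ.le)
      calc γ⁻¹ * (K * rexp (-(2*γ)⁻¹ * ‖x - θ'‖ ^ 2))
          = γ⁻¹ * (K * rexp (-(2*γ)⁻¹ * s^2)) := rfl
        _ ≤ γ⁻¹ * (K * (rexp γ⁻¹ * rexp (-((4*γ)⁻¹ * t^2)))) := h5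
    have hGd'nn : 0 ≤ γ⁻¹ * gaussDensity d γ (x - θ') :=
      mul_nonneg (inv_nonneg.2 hγ.le) (gaussDensity_nonneg hγ _)
    have f1 : |h x| * (γ⁻¹ * gaussDensity d γ (x - θ'))
        ≤ (A*(1+t^q)) * (γ⁻¹ * (K * (rexp γ⁻¹ * rexp (-((4*γ)⁻¹ * t^2))))) :=
      mul_le_mul (hA x) m1 hGd'nn (by positivity)
    have f2 : |h x| * (γ⁻¹ * gaussDensity d γ (x - θ')) * s
        ≤ (A*(1+t^q)) * (γ⁻¹ * (K * (rexp γ⁻¹ * rexp (-((4*γ)⁻¹ * t^2))))) * (1+t) :=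
      mul_le_mul f1 (by linarith) hs (by positivity)
    refine f2.trans (le_of_eq ?_)
    simp only [hbd, hCst]
    ring
  · -- bound integrable
    exact ((aux_masterInt hb4 hq).comp_sub_right θ).const_mul Cst
  · exact Filter.Eventually.of_forall fun x θ' _ =>
      (hasFDerivAt_gaussDensity x θ').const_mul (h x)

lemma aux_momInt {b p : ℝ} (hb : 0 < b) (hp : 0 ≤ p) :
    Integrable (fun v : E => ‖v‖ ^ p * rexp (-(b * ‖v‖ ^ 2))) := by
  have hcont : Continuous (fun v : E => ‖v‖ ^ p * rexp (-(b * ‖v‖ ^ 2))) := by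
    have h1 : Continuous (fun v : E => ‖v‖ ^ p) :=
      continuous_norm.rpow_const (fun v => Or.inr hp)
    fun_prop
  refine (aux_masterInt hb hp).mono' hcont.aestronglyMeasurable
    (Filter.Eventually.of_forall fun v => ?_)
  have ht : (0:ℝ) ≤ ‖v‖ := norm_nonneg v
  have htq : (0:ℝ) ≤ ‖v‖ ^ p := Real.rpow_nonneg ht p
  rw [Real.norm_of_nonneg (by positivity)]
  have key : ‖v‖ ^ p ≤ (1 + ‖v‖ ^ p) * (1 + ‖v‖) := by nlinarith [mul_nonneg htq ht]
  exact mul_le_mul_of_nonneg_right key (Real.exp_pos _).le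

lemma moment_scale (p : ℝ) {γ : ℝ} (hγ : 0 < γ) :
    ∫ x : E, ‖x‖ ^ p * rexp (-((2*γ)⁻¹ * ‖x‖ ^ 2)) =
      γ ^ ((d:ℝ)/2 + p/2) * ∫ y : E, ‖y‖ ^ p * rexp (-(2⁻¹ * ‖y‖ ^ 2)) := by
  have hs : (0:ℝ) < Real.sqrt γ := Real.sqrt_pos.2 hγ
  have h := Measure.integral_comp_smul (μ := (volume : Measure E))
    (f := fun x : E => ‖x‖ ^ p * rexp (-((2*γ)⁻¹ * ‖x‖ ^ 2))) (Real.sqrt γ)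
  have hfin : Module.finrank ℝ (EuclideanSpace ℝ (Fin d)) = d := by
    simp [finrank_euclideanSpace]
  rw [hfin] at h
  have heq : ∀ y : E, ‖Real.sqrt γ • y‖ ^ p * rexp (-((2*γ)⁻¹ * ‖Real.sqrt γ • y‖ ^ 2))
      = (Real.sqrt γ) ^ p * (‖y‖ ^ p * rexp (-(2⁻¹ * ‖y‖ ^ 2))) := by
    intro y
    have hn : ‖Real.sqrt γ • y‖ = Real.sqrt γ * ‖y‖ := by
      rw [norm_smul, Real.norm_eq_abs, abs_of_nonneg hs.le]
    rw [hn, Real.mul_rpow hs.le (norm_nonneg y)]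
    have h2 : (2*γ)⁻¹ * (Real.sqrt γ * ‖y‖) ^ 2 = 2⁻¹ * ‖y‖ ^ 2 := by
      rw [mul_pow, Real.sq_sqrt hγ.le]
      field_simp
    rw [h2]
    ring
  simp only [heq] at h
  rw [integral_const_mul] at h
  -- h : (√γ)^p * ∫ y, ... = |((√γ)^d)⁻¹| • ∫ x, f x
  have habs : |((Real.sqrt γ) ^ d)⁻¹| = ((Real.sqrt γ) ^ d)⁻¹ := by
    rw [abs_of_nonneg]; positivity
  rw [habs, smul_eq_mul] at h
  have hpow : (Real.sqrt γ : ℝ) ^ d * (Real.sqrt γ) ^ p = γ ^ ((d:ℝ)/2 + p/2) := by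
    rw [Real.sqrt_eq_rpow, ← Real.rpow_natCast (γ ^ ((1:ℝ)/2)) d, ← Real.rpow_mul hγ.le,
      ← Real.rpow_mul hγ.le, ← Real.rpow_add hγ]
    congr 1
    ring
  have hne : ((Real.sqrt γ) ^ d : ℝ) ≠ 0 := by positivity
  have h2 := (inv_mul_eq_iff_eq_mul₀ hne).1 h.symm
  rw [h2, ← hpow]
  ring


lemma gaussDensity_pos {γ : ℝ} (hγ : 0 < γ) (z : E) : 0 < gaussDensity d γ z := by
  rw [gaussDensity]; positivity

lemma aux_rpow_le_one_add {t a b : ℝ} (ht : 0 ≤ t) (ha : 0 ≤ a) (hab : a ≤ b) :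
    t ^ a ≤ 1 + t ^ b := by
  have hb : (0:ℝ) ≤ t ^ b := Real.rpow_nonneg ht b
  rcases le_or_gt t 1 with h | h
  · have := Real.rpow_le_one ht h ha
    linarith
  · have h2 : t ^ a ≤ t ^ b := Real.rpow_le_rpow_of_exponent_le h.le hab
    linarith

lemma aux_rpow_succ {t : ℝ} (ht : 0 ≤ t) (p : ℝ) (hp : 0 ≤ p) : t ^ p * t = t ^ (p + 1) := by
  rcases eq_or_lt_of_le ht with h0 | h0
  · rw [← h0]
    rw [Real.zero_rpow (by positivity : p + 1 ≠ 0), mul_zero]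
  · exact (Real.rpow_add_one h0.ne' p).symm

lemma norm_smul_gDeriv {γ : ℝ} (hγ : 0 < γ) (r : ℝ) (w : E) :
    ‖r • gDeriv d γ w‖ = |r| * (γ⁻¹ * gaussDensity d γ w) * ‖w‖ := by
  simp only [gDeriv, smul_smul]
  rw [norm_smul _ ((innerSL ℝ : E →L[ℝ] E →L[ℝ] ℝ) w), innerSL_apply_norm, Real.norm_eq_abs,
    abs_mul, abs_of_nonneg (mul_nonneg (inv_nonneg.2 hγ.le) (gaussDensity_nonneg hγ _))]

lemma integrable_smul_gDeriv {γ : ℝ} (hγ : 0 < γ) (θ : E) (h : E → ℝ)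
    (hm : AEStronglyMeasurable h (volume : Measure E)) {A q : ℝ} (hq : 0 ≤ q)
    (hA : ∀ x : E, |h x| ≤ A * (1 + ‖x - θ‖ ^ q)) :
    Integrable (fun x : E => h x • gDeriv d γ (x - θ)) := by
  set K : ℝ := (2*π*γ) ^ (-(d:ℝ)/2) with hK
  have hKpos : 0 < K := by rw [hK]; positivity
  refine (((aux_masterInt (b := (2*γ)⁻¹) (by positivity) hq).comp_sub_right θ).const_mul
      (A * (γ⁻¹ * K))).mono' (hm.smul (continuous_gDeriv θ).aestronglyMeasurable)
      (Filter.Eventually.of_forall fun x => ?_)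
  rw [norm_smul_gDeriv hγ]
  have hA0 : 0 ≤ A := by
    have h1 := hA θ
    have h2 : (0:ℝ) ≤ ‖θ - θ‖ ^ q := Real.rpow_nonneg (norm_nonneg _) q
    nlinarith [abs_nonneg (h θ)]
  set t := ‖x - θ‖ with htd
  have ht : 0 ≤ t := norm_nonneg _
  have htq : 0 ≤ t ^ q := Real.rpow_nonneg ht q
  have hGd : gaussDensity d γ (x - θ) = K * rexp (-(2*γ)⁻¹ * t ^ 2) := gaussDensity_eq _
  rw [hGd]
  have f1 : |h x| * (γ⁻¹ * (K * rexp (-(2*γ)⁻¹ * t ^ 2)))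
      ≤ (A * (1 + t ^ q)) * (γ⁻¹ * (K * rexp (-(2*γ)⁻¹ * t ^ 2))) :=
    mul_le_mul_of_nonneg_right (hA x) (by positivity)
  have f2 : |h x| * (γ⁻¹ * (K * rexp (-(2*γ)⁻¹ * t ^ 2))) * t
      ≤ (A * (1 + t ^ q)) * (γ⁻¹ * (K * rexp (-(2*γ)⁻¹ * t ^ 2))) * (1 + t) :=
    mul_le_mul f1 (by linarith) ht
      (mul_nonneg (mul_nonneg hA0 (by linarith)) (by positivity))
  refine f2.trans (le_of_eq ?_)
  have he : -(2*γ)⁻¹ * t ^ 2 = -((2*γ)⁻¹ * t ^ 2) := by ring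
  rw [he]
  ring

lemma aux_final (p : ℝ) {γ : ℝ} (hγ : 0 < γ) :
    γ⁻¹ * (2*π*γ) ^ (-(d:ℝ)/2) * ∫ x : E, ‖x‖ ^ p * rexp (-((2*γ)⁻¹ * ‖x‖ ^ 2))
      ≤ γ ^ ((p-2)/2) * ∫ y : E, ‖y‖ ^ p * rexp (-(2⁻¹ * ‖y‖ ^ 2)) := by
  set M := ∫ y : E, ‖y‖ ^ p * rexp (-(2⁻¹ * ‖y‖ ^ 2)) with hM
  have hMnn : 0 ≤ M := integral_nonneg fun y => by positivity
  rw [moment_scale p hγ]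
  have hsplit : (2*π*γ) ^ (-(d:ℝ)/2) = (2*π) ^ (-(d:ℝ)/2) * γ ^ (-(d:ℝ)/2) :=
    Real.mul_rpow (by positivity) hγ.le
  have h2π : (2*π) ^ (-(d:ℝ)/2) ≤ 1 := by
    apply Real.rpow_le_one_of_one_le_of_nonpos (by nlinarith [Real.pi_gt_three])
    have : (0:ℝ) ≤ (d:ℝ) := Nat.cast_nonneg d
    linarith
  have hcomb : γ⁻¹ * γ ^ (-(d:ℝ)/2) * γ ^ ((d:ℝ)/2 + p/2) = γ ^ ((p-2)/2) := by
    rw [← Real.rpow_neg_one, ← Real.rpow_add hγ, ← Real.rpow_add hγ]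
    congr 1
    ring
  calc γ⁻¹ * (2*π*γ) ^ (-(d:ℝ)/2) * (γ ^ ((d:ℝ)/2 + p/2) * M)
      = (2*π) ^ (-(d:ℝ)/2) * ((γ⁻¹ * γ ^ (-(d:ℝ)/2) * γ ^ ((d:ℝ)/2 + p/2)) * M) := by
        rw [hsplit]; ring
    _ = (2*π) ^ (-(d:ℝ)/2) * (γ ^ ((p-2)/2) * M) := by rw [hcomb]
    _ ≤ 1 * (γ ^ ((p-2)/2) * M) := by
        apply mul_le_mul_of_nonneg_right h2π
        have := Real.rpow_nonneg hγ.le ((p-2)/2)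
        positivity
    _ = γ ^ ((p-2)/2) * M := one_mul _

end Aux

theorem stmt11 {d : ℕ} {U : Type*} (ℓ : EuclideanSpace ℝ (Fin d) → U → ℝ)
    (J : U → ℝ) (hJ : ∀ u, 0 ≤ J u)
    (α β : ℝ) (hα0 : 0 ≤ α) (hα1 : α ≤ 1) (hβ : 1 ≤ β)
    (hH : ∀ (θ θ' : EuclideanSpace ℝ (Fin d)) (u : U),
      |ℓ θ u - ℓ θ' u| ≤ J u * (‖θ - θ'‖ ^ α + ‖θ - θ'‖ ^ β)) :
    ∃ C : ℝ, ∀ (θ : EuclideanSpace ℝ (Fin d)) (u : U) (γ : ℝ), 0 < γ → γ ≤ 1 →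
      ‖fderiv ℝ (fun θ' => gaussSmooth ℓ γ θ' u) θ‖ ≤ C * J u * γ ^ ((α - 1) / 2) := by
  classical
  set M1 : ℝ := ∫ y : EuclideanSpace ℝ (Fin d), ‖y‖ ^ (α+1) * rexp (-(2⁻¹ * ‖y‖ ^ 2)) with hM1d
  set M2 : ℝ := ∫ y : EuclideanSpace ℝ (Fin d), ‖y‖ ^ (β+1) * rexp (-(2⁻¹ * ‖y‖ ^ 2)) with hM2d
  have hM1nn : 0 ≤ M1 := integral_nonneg fun y => by positivity
  have hM2nn : 0 ≤ M2 := integral_nonneg fun y => by positivity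
  refine ⟨M1 + M2, fun θ u γ hγ hγ1 => ?_⟩
  have hrp : (0:ℝ) ≤ γ ^ ((α-1)/2) := Real.rpow_nonneg hγ.le _
  have hβ0 : (0:ℝ) ≤ β := by linarith
  by_cases hm : AEStronglyMeasurable (fun x => ℓ x u)
      (volume : Measure (EuclideanSpace ℝ (Fin d)))
  · -- measurable case
    set A : ℝ := |ℓ θ u| + 2 * J u with hAd
    have hAb : ∀ x, |(fun x => ℓ x u) x| ≤ A * (1 + ‖x - θ‖ ^ β) := by
      intro x
      simp only []
      have h1 := hH x θ u
      have ht : (0:ℝ) ≤ ‖x - θ‖ := norm_nonneg _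
      have h2 : ‖x - θ‖ ^ α ≤ 1 + ‖x - θ‖ ^ β :=
        aux_rpow_le_one_add ht hα0 (le_trans hα1 hβ)
      have h3 : (0:ℝ) ≤ ‖x - θ‖ ^ β := Real.rpow_nonneg ht β
      have h4 : |ℓ x u| ≤ |ℓ θ u| + |ℓ x u - ℓ θ u| := by
        have h5 : ℓ x u = ℓ θ u + (ℓ x u - ℓ θ u) := by ring
        calc |ℓ x u| = |ℓ θ u + (ℓ x u - ℓ θ u)| := by rw [← h5]
          _ ≤ |ℓ θ u| + |ℓ x u - ℓ θ u| := abs_add_le _ _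
      have hJ0 := hJ u
      nlinarith [mul_le_mul_of_nonneg_left h2 hJ0, mul_nonneg (abs_nonneg (ℓ θ u)) h3,
        mul_nonneg hJ0 h3]
    have h1b : ∀ x : EuclideanSpace ℝ (Fin d),
        |(fun _ : EuclideanSpace ℝ (Fin d) => (1:ℝ)) x| ≤ 1 * (1 + ‖x - θ‖ ^ β) := by
      intro x
      have h3 : (0:ℝ) ≤ ‖x - θ‖ ^ β := Real.rpow_nonneg (norm_nonneg _) β
      simp only [abs_one, one_mul]
      linarith
    have hder := hasFDerivAt_gaussSmoothAux hγ θ (fun x => ℓ x u) hm hβ0 hAb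
    have hder1 := hasFDerivAt_gaussSmoothAux hγ θ (fun _ => (1:ℝ))
      aestronglyMeasurable_const hβ0 h1b
    have hder1' : HasFDerivAt
        (fun θ' : EuclideanSpace ℝ (Fin d) => ∫ x, gaussDensity d γ (x - θ'))
        (∫ x, gDeriv d γ (x - θ)) θ := by simpa using hder1
    have hconstfun : (fun θ' : EuclideanSpace ℝ (Fin d) => ∫ x, gaussDensity d γ (x - θ'))
        = fun _ => ∫ x, gaussDensity d γ x := by
      funext θ'
      exact integral_sub_right_eq_self (gaussDensity d γ) θ'
    rw [hconstfun] at hder1'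
    have hzero : (∫ x, gDeriv d γ (x - θ)) = 0 :=
      hder1'.unique (hasFDerivAt_const _ _)
    have hfd : fderiv ℝ (fun θ' => gaussSmooth ℓ γ θ' u) θ
        = ∫ x, ℓ x u • gDeriv d γ (x - θ) := by
      have he : (fun θ' => gaussSmooth ℓ γ θ' u)
          = fun θ' => ∫ x, ℓ x u * gaussDensity d γ (x - θ') := rfl
      rw [he]
      exact hder.fderiv
    rw [hfd]
    have hint1 : Integrable (fun x => ℓ x u • gDeriv d γ (x - θ)) :=
      integrable_smul_gDeriv hγ θ _ hm hβ0 hAb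
    have hint2 : Integrable (fun x => gDeriv d γ (x - θ)) := by
      have := integrable_smul_gDeriv hγ θ (fun _ => (1:ℝ)) aestronglyMeasurable_const hβ0 h1b
      simpa using this
    have hsub : (∫ x, ℓ x u • gDeriv d γ (x - θ))
        = ∫ x, (ℓ x u - ℓ θ u) • gDeriv d γ (x - θ) := by
      calc (∫ x, ℓ x u • gDeriv d γ (x - θ))
          = (∫ x, ℓ x u • gDeriv d γ (x - θ)) - ℓ θ u • (∫ x, gDeriv d γ (x - θ)) := by
            rw [hzero, smul_zero, sub_zero]
        _ = (∫ x, ℓ x u • gDeriv d γ (x - θ)) - ∫ x, ℓ θ u • gDeriv d γ (x - θ) := by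
            rw [integral_smul]
        _ = ∫ x, (ℓ x u • gDeriv d γ (x - θ) - ℓ θ u • gDeriv d γ (x - θ)) :=
            (integral_sub hint1 (hint2.smul (ℓ θ u))).symm
        _ = ∫ x, (ℓ x u - ℓ θ u) • gDeriv d γ (x - θ) := by
            congr 1
            funext x
            exact (sub_smul (ℓ x u) (ℓ θ u) _).symm
    rw [hsub]
    set K : ℝ := (2*π*γ) ^ (-(d:ℝ)/2) with hKd
    have hKpos : 0 < K := by rw [hKd]; positivity
    set maj : EuclideanSpace ℝ (Fin d) → ℝ := fun x =>
      (J u * (γ⁻¹ * K)) * (‖x - θ‖ ^ (α+1) * rexp (-((2*γ)⁻¹ * ‖x - θ‖ ^ 2))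
        + ‖x - θ‖ ^ (β+1) * rexp (-((2*γ)⁻¹ * ‖x - θ‖ ^ 2))) with hmajd
    have hi1 : Integrable (fun v : EuclideanSpace ℝ (Fin d) =>
        ‖v‖ ^ (α+1) * rexp (-((2*γ)⁻¹ * ‖v‖ ^ 2))) :=
      aux_momInt (by positivity) (by linarith)
    have hi2 : Integrable (fun v : EuclideanSpace ℝ (Fin d) =>
        ‖v‖ ^ (β+1) * rexp (-((2*γ)⁻¹ * ‖v‖ ^ 2))) :=
      aux_momInt (by positivity) (by linarith)
    have hmajint : Integrable maj :=
      (((hi1.add hi2).comp_sub_right θ).const_mul _)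
    have hnle : ∀ x, ‖(ℓ x u - ℓ θ u) • gDeriv d γ (x - θ)‖ ≤ maj x := by
      intro x
      rw [norm_smul_gDeriv hγ]
      have ht : (0:ℝ) ≤ ‖x - θ‖ := norm_nonneg _
      have h1 := hH x θ u
      have hGd : gaussDensity d γ (x - θ)
          = K * rexp (-(2*γ)⁻¹ * ‖x - θ‖ ^ 2) := gaussDensity_eq _
      rw [hGd]
      have e1 := aux_rpow_succ ht α hα0
      have e2 := aux_rpow_succ ht β hβ0
      have f1 : |ℓ x u - ℓ θ u| * (γ⁻¹ * (K * rexp (-(2*γ)⁻¹ * ‖x - θ‖ ^ 2))) * ‖x - θ‖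
          ≤ (J u * (‖x - θ‖ ^ α + ‖x - θ‖ ^ β))
            * (γ⁻¹ * (K * rexp (-(2*γ)⁻¹ * ‖x - θ‖ ^ 2))) * ‖x - θ‖ :=
        mul_le_mul_of_nonneg_right (mul_le_mul_of_nonneg_right h1 (by positivity)) ht
      refine f1.trans (le_of_eq ?_)
      rw [hmajd]
      simp only []
      have he : -(2*γ)⁻¹ * ‖x - θ‖ ^ 2 = -((2*γ)⁻¹ * ‖x - θ‖ ^ 2) := by ring
      rw [he, ← e1, ← e2]
      ring
    calc ‖∫ x, (ℓ x u - ℓ θ u) • gDeriv d γ (x - θ)‖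
        ≤ ∫ x, maj x := by
          refine (norm_integral_le_integral_norm _).trans ?_
          exact integral_mono_of_nonneg
            (Filter.Eventually.of_forall fun x => norm_nonneg _) hmajint
            (Filter.Eventually.of_forall hnle)
      _ = (J u * (γ⁻¹ * K)) *
          ((∫ x : EuclideanSpace ℝ (Fin d), ‖x‖ ^ (α+1) * rexp (-((2*γ)⁻¹ * ‖x‖ ^ 2)))
          + ∫ x : EuclideanSpace ℝ (Fin d), ‖x‖ ^ (β+1) * rexp (-((2*γ)⁻¹ * ‖x‖ ^ 2))) := by
          rw [hmajd]
          rw [integral_const_mul]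
          congr 1
          rw [integral_add (hi1.comp_sub_right θ) (hi2.comp_sub_right θ)]
          congr 1
          · exact integral_sub_right_eq_self
              (fun v => ‖v‖ ^ (α+1) * rexp (-((2*γ)⁻¹ * ‖v‖ ^ 2))) θ
          · exact integral_sub_right_eq_self
              (fun v => ‖v‖ ^ (β+1) * rexp (-((2*γ)⁻¹ * ‖v‖ ^ 2))) θ
      _ ≤ (M1 + M2) * J u * γ ^ ((α-1)/2) := by
          have hf1 := aux_final (d := d) (α+1) hγ
          have hf2 := aux_final (d := d) (β+1) hγ
          rw [show ((α+1)-2)/2 = (α-1)/2 by ring] at hf1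
          rw [show ((β+1)-2)/2 = (β-1)/2 by ring] at hf2
          rw [← hM1d] at hf1
          rw [← hM2d] at hf2
          have hγβα : γ ^ ((β-1)/2) ≤ γ ^ ((α-1)/2) :=
            Real.rpow_le_rpow_of_exponent_ge hγ hγ1 (by linarith)
          have hJ0 := hJ u
          have hb2 : γ ^ ((β-1)/2) * M2 ≤ γ ^ ((α-1)/2) * M2 :=
            mul_le_mul_of_nonneg_right hγβα hM2nn
          have hIa : (0:ℝ) ≤ ∫ x : EuclideanSpace ℝ (Fin d),
              ‖x‖ ^ (α+1) * rexp (-((2*γ)⁻¹ * ‖x‖ ^ 2)) :=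
            integral_nonneg fun x => by positivity
          have hIb : (0:ℝ) ≤ ∫ x : EuclideanSpace ℝ (Fin d),
              ‖x‖ ^ (β+1) * rexp (-((2*γ)⁻¹ * ‖x‖ ^ 2)) :=
            integral_nonneg fun x => by positivity
          have hstep : γ⁻¹ * K *
              ((∫ x : EuclideanSpace ℝ (Fin d), ‖x‖ ^ (α+1) * rexp (-((2*γ)⁻¹ * ‖x‖ ^ 2)))
              + ∫ x : EuclideanSpace ℝ (Fin d), ‖x‖ ^ (β+1) * rexp (-((2*γ)⁻¹ * ‖x‖ ^ 2)))
              ≤ γ ^ ((α-1)/2) * M1 + γ ^ ((α-1)/2) * M2 := by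
            rw [mul_add]
            have := add_le_add hf1 hf2
            calc γ⁻¹ * K * (∫ x : EuclideanSpace ℝ (Fin d),
                  ‖x‖ ^ (α+1) * rexp (-((2*γ)⁻¹ * ‖x‖ ^ 2)))
                + γ⁻¹ * K * ∫ x : EuclideanSpace ℝ (Fin d),
                  ‖x‖ ^ (β+1) * rexp (-((2*γ)⁻¹ * ‖x‖ ^ 2))
                ≤ γ ^ ((α-1)/2) * M1 + γ ^ ((β-1)/2) * M2 := by
                  rw [hKd]
                  exact add_le_add hf1 hf2
              _ ≤ γ ^ ((α-1)/2) * M1 + γ ^ ((α-1)/2) * M2 := by linarith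
          calc (J u * (γ⁻¹ * K)) *
              ((∫ x : EuclideanSpace ℝ (Fin d), ‖x‖ ^ (α+1) * rexp (-((2*γ)⁻¹ * ‖x‖ ^ 2)))
              + ∫ x : EuclideanSpace ℝ (Fin d), ‖x‖ ^ (β+1) * rexp (-((2*γ)⁻¹ * ‖x‖ ^ 2)))
              = J u * (γ⁻¹ * K *
              ((∫ x : EuclideanSpace ℝ (Fin d), ‖x‖ ^ (α+1) * rexp (-((2*γ)⁻¹ * ‖x‖ ^ 2)))
              + ∫ x : EuclideanSpace ℝ (Fin d), ‖x‖ ^ (β+1) * rexp (-((2*γ)⁻¹ * ‖x‖ ^ 2)))) := by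
                ring
            _ ≤ J u * (γ ^ ((α-1)/2) * M1 + γ ^ ((α-1)/2) * M2) :=
                mul_le_mul_of_nonneg_left hstep hJ0
            _ = (M1 + M2) * J u * γ ^ ((α-1)/2) := by ring
  · -- non-measurable case: the integral is everywhere undefined, hence zero
    have hzero : (fun θ' => gaussSmooth ℓ γ θ' u)
        = fun _ : EuclideanSpace ℝ (Fin d) => (0:ℝ) := by
      funext θ'
      rw [gaussSmooth]
      apply integral_undef
      intro hInt
      apply hm
      have hpos : ∀ x : EuclideanSpace ℝ (Fin d), gaussDensity d γ (x - θ') ≠ 0 :=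
        fun x => (gaussDensity_pos hγ _).ne'
      have hcont : Continuous fun x : EuclideanSpace ℝ (Fin d) =>
          (gaussDensity d γ (x - θ'))⁻¹ :=
        (continuous_gaussDensity.comp (continuous_id.sub continuous_const)).inv₀ hpos
      have hprod := hInt.aestronglyMeasurable.mul hcont.aestronglyMeasurable
      refine hprod.congr (Filter.Eventually.of_forall fun x => ?_)
      show ℓ x u * gaussDensity d γ (x - θ') * (gaussDensity d γ (x - θ'))⁻¹ = ℓ x u
      rw [mul_assoc, mul_inv_cancel₀ (hpos x), mul_one]
    rw [hzero, fderiv_const_apply]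
    simp only [Pi.zero_apply, norm_zero]
    have hJ0 := hJ u
    positivity
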